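/- Let ℓ, q, k ∈ ℂ and let I ⊆ F be the two-sided ideal generated by the three elements x₂x₁ − x₁x₂ − ℓ x₁², x₃x₁ − x₁x₃ + q x₁², and x₃x₂ − x₂x₃ + ℓ x₁x₃ + q x₁x₂ + (k − qℓ) x₁². Then the images in F/I of the monomials x₁^{a₁} x₂^{a₂} x₃^{a₃}, over all a₁, a₂, a₃ ∈ ℕ, form a ℂ-basis of F/I. (This quotient is the Nichols algebra associated to the braiding of type R_{1,5} with t = 1 and p = 2q; it has Gelfand–Kirillov dimension 3.) -/

import Mathlib

/-- The free associative unital `ℂ`-algebra on three generators. -/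
abbrev F : Type := FreeAlgebra ℂ (Fin 3)

/-- The generators `x₁ = X 0`, `x₂ = X 1`, `x₃ = X 2`. -/
noncomputable def X (i : Fin 3) : F := FreeAlgebra.ι ℂ i

/-- Generators: `x₂x₁ − x₁x₂ − ℓ x₁²`, `x₃x₁ − x₁x₃ + q x₁²`, `x₃x₂ − x₂x₃ + ℓ x₁x₃ + q x₁x₂ + (k − qℓ) x₁²`. -/
noncomputable def S (l q k : ℂ) : Set F :=
  {X 1 * X 0 - X 0 * X 1 - l • (X 0 * X 0),
   X 2 * X 0 - X 0 * X 2 + q • (X 0 * X 0),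
   X 2 * X 1 - X 1 * X 2 + l • (X 0 * X 2) + q • (X 0 * X 1) + (k - q * l) • (X 0 * X 0)}

/-- The relation whose two-sided-ideal closure is the ideal generated by `S`;
`RingQuot rel` is the quotient `F/I`. -/
def rel (l q k : ℂ) : F → F → Prop := fun x y => x ∈ S l q k ∧ y = 0

open Finsupp
noncomputable section
abbrev V : Type := (ℕ × ℕ × ℕ) →₀ ℂ
def e (a b c : ℕ) : V := Finsupp.single (a,b,c) 1
def mkEnd (v : ℕ × ℕ × ℕ → V) : Module.End ℂ V :=
  Finsupp.lsum ℂ (fun p => LinearMap.toSpanSingleton ℂ V (v p))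
lemma mkEnd_e (v : ℕ × ℕ × ℕ → V) (a b c : ℕ) : mkEnd v (e a b c) = v (a,b,c) := by
  simp [mkEnd, e, LinearMap.toSpanSingleton]
lemma end_ext {T T' : Module.End ℂ V} (H : ∀ a b c, T (e a b c) = T' (e a b c)) : T = T' := by
  apply Finsupp.lhom_ext
  rintro ⟨a,b,c⟩ x
  have hx : (Finsupp.single ((a,b,c) : ℕ×ℕ×ℕ) x : V) = x • e a b c := by
    simp [e, Finsupp.smul_single]
  rw [hx, map_smul, map_smul, H]

variable (l q k : ℂ)

def L1 : Module.End ℂ V := mkEnd (fun p => e (p.1+1) p.2.1 p.2.2)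
def L2 : Module.End ℂ V :=
  mkEnd (fun p => e p.1 (p.2.1+1) p.2.2 + ((p.1 : ℂ) * l) • e (p.1+1) p.2.1 p.2.2)
def h : ℕ → ℕ → V
  | 0, c => e 0 0 (c+1)
  | (b+1), c => L2 l (h b c) - l • L1 (h b c) - q • e 1 (b+1) c - (k - q*l) • e 2 b c
def L3 : Module.End ℂ V :=
  mkEnd (fun p => (L1^p.1) (h l q k p.2.1 p.2.2) - ((p.1 : ℂ) * q) • e (p.1+1) p.2.1 p.2.2)

lemma L1_e (a b c : ℕ) : L1 (e a b c) = e (a+1) b c := mkEnd_e _ a b c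
lemma L2_e (a b c : ℕ) : L2 l (e a b c) = e a (b+1) c + ((a : ℂ) * l) • e (a+1) b c := mkEnd_e _ a b c
lemma L3_e (a b c : ℕ) :
    L3 l q k (e a b c) = (L1^a) (h l q k b c) - ((a : ℂ) * q) • e (a+1) b c := mkEnd_e _ a b c

lemma L1pow_e (n a b c : ℕ) : (L1^n) (e a b c) = e (n+a) b c := by
  induction n with
  | zero => simp
  | succ n ih =>
      rw [pow_succ', Module.End.mul_apply, ih, L1_e]
      congr 1
      omega

lemma L1_pow_succ (n : ℕ) (v : V) : L1 ((L1^n) v) = (L1^(n+1)) v := by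
  rw [pow_succ', Module.End.mul_apply]

lemma R1 : L2 l * L1 = L1 * L2 l + l • (L1 * L1) := by
  apply end_ext
  intro a b c
  simp only [Module.End.mul_apply, LinearMap.add_apply, LinearMap.smul_apply,
    L1_e, L2_e, map_add, map_smul]
  push_cast
  module

lemma R1_apply (v : V) : L2 l (L1 v) = L1 (L2 l v) + l • L1 (L1 v) := by
  have := LinearMap.ext_iff.mp (R1 l) v
  simpa [Module.End.mul_apply] using this

lemma L2L1pow_apply (a : ℕ) (w : V) :
    (L1^a) (L2 l w) = L2 l ((L1^a) w) - ((a : ℂ) * l) • (L1^(a+1)) w := by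
  induction a with
  | zero => simp
  | succ a ih =>
      rw [pow_succ', Module.End.mul_apply, ih]
      have h1 : L1 (L2 l ((L1^a) w)) = L2 l (L1 ((L1^a) w)) - l • L1 (L1 ((L1^a) w)) := by
        rw [R1_apply]; abel
      rw [map_sub, map_smul, h1]
      rw [L1_pow_succ, L1_pow_succ, Module.End.mul_apply, L1_pow_succ]
      push_cast
      module

lemma L1_pow_succ' (n : ℕ) (v : V) : (L1^n) (L1 v) = (L1^(n+1)) v := by
  rw [pow_succ, Module.End.mul_apply]

lemma R2 : L3 l q k * L1 = L1 * L3 l q k - q • (L1 * L1) := by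
  apply end_ext
  intro a b c
  simp only [Module.End.mul_apply, LinearMap.sub_apply, LinearMap.smul_apply,
    L1_e, L3_e, map_sub, map_smul]
  rw [L1_pow_succ]
  push_cast
  module

lemma h_succ (b c : ℕ) :
    h l q k (b+1) c = L2 l (h l q k b c) - l • L1 (h l q k b c)
      - q • e 1 (b+1) c - (k - q*l) • e 2 b c := rfl

lemma R3 : L3 l q k * L2 l = L2 l * L3 l q k - l • (L1 * L3 l q k)
    - q • (L1 * L2 l) - (k - q*l) • (L1 * L1) := by
  apply end_ext
  intro a b c
  simp only [Module.End.mul_apply, LinearMap.sub_apply, LinearMap.smul_apply,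
    L1_e, L2_e, L3_e, map_add, map_sub, map_smul]
  rw [h_succ, map_sub, map_sub, map_sub, map_smul, map_smul, map_smul,
    L2L1pow_apply, L1pow_e, L1pow_e, L1_pow_succ', L1_pow_succ]
  push_cast
  module

lemma h_zero (c : ℕ) : h l q k 0 c = e 0 0 (c+1) := rfl

lemma L3_pow_e000 (c : ℕ) : ((L3 l q k)^c) (e 0 0 0) = e 0 0 c := by
  induction c with
  | zero => simp
  | succ c ih =>
      rw [pow_succ', Module.End.mul_apply, ih, L3_e]
      simp [h_zero]

lemma L2_pow_e (b c : ℕ) : ((L2 l)^b) (e 0 0 c) = e 0 b c := by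
  induction b with
  | zero => simp
  | succ b ih =>
      rw [pow_succ', Module.End.mul_apply, ih, L2_e]
      simp

def rho : F →ₐ[ℂ] Module.End ℂ V :=
  FreeAlgebra.lift ℂ (fun i => ![L1, L2 l, L3 l q k] i)

lemma rho_X0 : rho l q k (X 0) = L1 := by simp [rho, X]
lemma rho_X1 : rho l q k (X 1) = L2 l := by simp [rho, X]
lemma rho_X2 : rho l q k (X 2) = L3 l q k := by simp [rho, X]

lemma rho_S : ∀ x ∈ S l q k, rho l q k x = 0 := by
  intro x hx
  simp only [S, Set.mem_insert_iff, Set.mem_singleton_iff] at hx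
  rcases hx with rfl | rfl | rfl
  · simp only [map_sub, map_smul, map_mul, rho_X0, rho_X1]
    rw [R1]; abel
  · simp only [map_add, map_sub, map_smul, map_mul, rho_X0, rho_X2]
    rw [R2]; abel
  · simp only [map_add, map_sub, map_smul, map_mul, rho_X0, rho_X1, rho_X2]
    rw [R3]; abel

def phiA : RingQuot (rel l q k) →ₐ[ℂ] Module.End ℂ V :=
  RingQuot.liftAlgHom ℂ ⟨rho l q k, by
    rintro x y ⟨hx, rfl⟩
    rw [rho_S l q k x hx, map_zero]⟩

lemma phiA_mk (x : F) :
    phiA l q k (RingQuot.mkAlgHom ℂ (rel l q k) x) = rho l q k x := by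
  rw [phiA, RingQuot.liftAlgHom_mkAlgHom_apply]

lemma eval_mono (a b c : ℕ) :
    phiA l q k (RingQuot.mkAlgHom ℂ (rel l q k) (X 0 ^ a * X 1 ^ b * X 2 ^ c)) (e 0 0 0)
      = Finsupp.single (a,b,c) (1:ℂ) := by
  rw [phiA_mk, map_mul, map_mul, map_pow, map_pow, map_pow, rho_X0, rho_X1, rho_X2,
    Module.End.mul_apply, Module.End.mul_apply, L3_pow_e000, L2_pow_e, L1pow_e]
  simp [e]

lemma indep (l q k : ℂ) :
    LinearIndependent ℂ (fun e : ℕ × ℕ × ℕ =>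
      RingQuot.mkAlgHom ℂ (rel l q k) (X 0 ^ e.1 * X 1 ^ e.2.1 * X 2 ^ e.2.2)) := by
  apply LinearIndependent.of_comp
    ((LinearMap.applyₗ (e 0 0 0)).comp (phiA l q k).toLinearMap)
  have hcomp : (((LinearMap.applyₗ (e 0 0 0)).comp (phiA l q k).toLinearMap) ∘
      (fun p : ℕ × ℕ × ℕ =>
        RingQuot.mkAlgHom ℂ (rel l q k) (X 0 ^ p.1 * X 1 ^ p.2.1 * X 2 ^ p.2.2)))
      = fun p : ℕ × ℕ × ℕ => (Finsupp.single p 1 : V) := by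
    funext p
    simpa using eval_mono l q k p.1 p.2.1 p.2.2
  rw [hcomp]
  simpa [Finsupp.coe_basisSingleOne] using
    (Finsupp.basisSingleOne : Module.Basis (ℕ × ℕ × ℕ) ℂ V).linearIndependent

end

section SpanSide
variable (l q k : ℂ)

local notation "π" => RingQuot.mkAlgHom ℂ (rel l q k)

lemma span_top :
    Submodule.span ℂ (Set.range (fun e : ℕ × ℕ × ℕ =>
      RingQuot.mkAlgHom ℂ (rel l q k) (X 0 ^ e.1 * X 1 ^ e.2.1 * X 2 ^ e.2.2))) = ⊤ := by
  set W : Submodule ℂ (RingQuot (rel l q k)) :=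
    Submodule.span ℂ (Set.range (fun e : ℕ × ℕ × ℕ =>
      RingQuot.mkAlgHom ℂ (rel l q k) (X 0 ^ e.1 * X 1 ^ e.2.1 * X 2 ^ e.2.2))) with hW
  set y0 : RingQuot (rel l q k) := π (X 0) with hy0
  set y1 : RingQuot (rel l q k) := π (X 1) with hy1
  set y2 : RingQuot (rel l q k) := π (X 2) with hy2
  have memW : ∀ a b c : ℕ, y0^a * y1^b * y2^c ∈ W := by
    intro a b c
    apply Submodule.subset_span
    exact ⟨(a,b,c), by simp [map_mul, map_pow]; rfl⟩
  have hS : ∀ x ∈ S l q k, π x = 0 := by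
    intro x hx
    have h0 : π x = π 0 := RingQuot.mkAlgHom_rel ℂ ⟨hx, rfl⟩
    simpa using h0
  have r1 : y1 * y0 = y0 * y1 + l • (y0 * y0) := by
    have h1 := hS _ (show X 1 * X 0 - X 0 * X 1 - l • (X 0 * X 0) ∈ S l q k by
      simp [S])
    simp only [map_sub, map_smul, map_mul] at h1
    have h2 : y1*y0 - (y0*y1 + l•(y0*y0)) = 0 := by rw [← h1]; abel
    exact sub_eq_zero.mp h2
  have r2 : y2 * y0 = y0 * y2 - q • (y0 * y0) := by
    have h1 := hS _ (show X 2 * X 0 - X 0 * X 2 + q • (X 0 * X 0) ∈ S l q k by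
      simp [S])
    simp only [map_add, map_sub, map_smul, map_mul] at h1
    have h2 : y2*y0 - (y0*y2 - q•(y0*y0)) = 0 := by rw [← h1]; abel
    exact sub_eq_zero.mp h2
  have r3 : y2 * y1 = y1*y2 - l•(y0*y2) - q•(y0*y1) - (k-q*l)•(y0*y0) := by
    have h1 := hS _ (show X 2 * X 1 - X 1 * X 2 + l • (X 0 * X 2) + q • (X 0 * X 1)
        + (k - q * l) • (X 0 * X 0) ∈ S l q k by simp [S])
    simp only [map_add, map_sub, map_smul, map_mul] at h1
    have h2 : y2*y1 - (y1*y2 - l•(y0*y2) - q•(y0*y1) - (k-q*l)•(y0*y0)) = 0 := by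
      rw [← h1]; abel
    exact sub_eq_zero.mp h2
  have powA : ∀ a : ℕ, y1 * y0^a = y0^a * y1 + ((a:ℂ)*l) • (y0^(a+1)) := by
    intro a
    induction a with
    | zero => simp
    | succ a ih =>
        calc y1 * y0 ^ (a+1) = (y1 * y0 ^ a) * y0 := by rw [pow_succ, ← mul_assoc]
        _ = (y0^a * y1) * y0 + ((a:ℂ)*l) • (y0^(a+1) * y0) := by
            rw [ih, add_mul, smul_mul_assoc]
        _ = y0^a * (y0 * y1 + l • (y0*y0)) + ((a:ℂ)*l) • (y0^(a+1+1)) := by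
            rw [mul_assoc, r1, ← pow_succ]
        _ = y0^(a+1) * y1 + (((a:ℕ)+1:ℂ)*l) • (y0^(a+1+1)) := by
            rw [mul_add, mul_smul_comm, ← mul_assoc, ← pow_succ, ← mul_assoc, ← pow_succ,
              ← pow_succ]
            module
        _ = y0^(a+1) * y1 + (((a+1:ℕ):ℂ)*l) • (y0^(a+1+1)) := by push_cast; ring_nf
  have powB : ∀ a : ℕ, y2 * y0^a = y0^a * y2 - ((a:ℂ)*q) • (y0^(a+1)) := by
    intro a
    induction a with
    | zero => simp
    | succ a ih =>
        calc y2 * y0 ^ (a+1) = (y2 * y0 ^ a) * y0 := by rw [pow_succ, ← mul_assoc]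
        _ = (y0^a * y2) * y0 - ((a:ℂ)*q) • (y0^(a+1) * y0) := by
            rw [ih, sub_mul, smul_mul_assoc]
        _ = y0^a * (y0 * y2 - q • (y0*y0)) - ((a:ℂ)*q) • (y0^(a+1+1)) := by
            rw [mul_assoc, r2, ← pow_succ]
        _ = y0^(a+1) * y2 - (((a:ℕ)+1:ℂ)*q) • (y0^(a+1+1)) := by
            rw [mul_sub, mul_smul_comm, ← mul_assoc, ← pow_succ, ← mul_assoc, ← pow_succ,
              ← pow_succ]
            module
        _ = y0^(a+1) * y2 - (((a+1:ℕ):ℂ)*q) • (y0^(a+1+1)) := by push_cast; ring_nf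
  have c0 : ∀ w ∈ W, y0 * w ∈ W := by
    intro w hw
    refine Submodule.span_induction ?_ ?_ ?_ ?_ hw
    · rintro x ⟨⟨a,b,c⟩, rfl⟩
      have hx : (fun e : ℕ × ℕ × ℕ =>
          RingQuot.mkAlgHom ℂ (rel l q k) (X 0 ^ e.1 * X 1 ^ e.2.1 * X 2 ^ e.2.2)) (a,b,c)
          = y0^a * y1^b * y2^c := by simp [map_mul, map_pow]; rfl
      rw [hx]
      have : y0 * (y0^a * y1^b * y2^c) = y0^(a+1) * y1^b * y2^c := by
        rw [← mul_assoc, ← mul_assoc, ← pow_succ']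
      rw [this]; exact memW _ _ _
    · simp
    · intro x y _ _ hx hy
      rw [mul_add]; exact add_mem hx hy
    · intro r x _ hx
      rw [mul_smul_comm]; exact W.smul_mem r hx
  have c0a : ∀ (n : ℕ), ∀ w ∈ W, y0^n * w ∈ W := by
    intro n
    induction n with
    | zero => intro w hw; simpa using hw
    | succ n ih =>
        intro w hw
        have : y0^(n+1) * w = y0 * (y0^n * w) := by rw [pow_succ', mul_assoc]
        rw [this]; exact c0 _ (ih w hw)
  have c2 : ∀ w ∈ W, y1 * w ∈ W := by
    intro w hw
    refine Submodule.span_induction ?_ ?_ ?_ ?_ hw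
    · rintro x ⟨⟨a,b,c⟩, rfl⟩
      have hx : (fun e : ℕ × ℕ × ℕ =>
          RingQuot.mkAlgHom ℂ (rel l q k) (X 0 ^ e.1 * X 1 ^ e.2.1 * X 2 ^ e.2.2)) (a,b,c)
          = y0^a * y1^b * y2^c := by simp [map_mul, map_pow]; rfl
      rw [hx]
      have key : y1 * (y0^a * y1^b * y2^c)
          = y0^a * y1^(b+1) * y2^c + ((a:ℂ)*l) • (y0^(a+1) * y1^b * y2^c) := by
        calc y1 * (y0^a * y1^b * y2^c) = (y1 * y0^a) * (y1^b * y2^c) := by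
              rw [mul_assoc, ← mul_assoc y1]
        _ = (y0^a * y1) * (y1^b * y2^c) + ((a:ℂ)*l) • (y0^(a+1) * (y1^b * y2^c)) := by
              rw [powA, add_mul, smul_mul_assoc]
        _ = y0^a * y1^(b+1) * y2^c + ((a:ℂ)*l) • (y0^(a+1) * y1^b * y2^c) := by
              rw [mul_assoc, ← mul_assoc y1, ← pow_succ', ← mul_assoc, ← mul_assoc]
      rw [key]
      exact add_mem (memW _ _ _) (W.smul_mem _ (memW _ _ _))
    · simp
    · intro x y _ _ hx hy
      rw [mul_add]; exact add_mem hx hy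
    · intro r x _ hx
      rw [mul_smul_comm]; exact W.smul_mem r hx
  have m0 : ∀ b c : ℕ, y1^b * y2^c ∈ W := by
    intro b c; simpa using memW 0 b c
  have caux : ∀ b c : ℕ, y2 * (y1^b * y2^c) ∈ W := by
    intro b
    induction b with
    | zero =>
        intro c
        have : y2 * (y1^0 * y2^c) = y0^0 * y1^0 * y2^(c+1) := by
          simp [pow_succ']
        rw [this]; exact memW _ _ _
    | succ b ih =>
        intro c
        have key : y2 * (y1^(b+1) * y2^c) = (y2 * y1) * (y1^b * y2^c) := by
          rw [pow_succ', mul_assoc, ← mul_assoc y2]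
        rw [key, r3, sub_mul, sub_mul, sub_mul, smul_mul_assoc, smul_mul_assoc,
          smul_mul_assoc, mul_assoc y1, mul_assoc y0, mul_assoc y0, mul_assoc y0]
        refine sub_mem (sub_mem (sub_mem ?_ ?_) ?_) ?_
        · exact c2 _ (ih c)
        · exact W.smul_mem _ (c0 _ (ih c))
        · exact W.smul_mem _ (c0 _ (c2 _ (m0 b c)))
        · exact W.smul_mem _ (c0 _ (c0 _ (m0 b c)))
  have c3 : ∀ w ∈ W, y2 * w ∈ W := by
    intro w hw
    refine Submodule.span_induction ?_ ?_ ?_ ?_ hw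
    · rintro x ⟨⟨a,b,c⟩, rfl⟩
      have hx : (fun e : ℕ × ℕ × ℕ =>
          RingQuot.mkAlgHom ℂ (rel l q k) (X 0 ^ e.1 * X 1 ^ e.2.1 * X 2 ^ e.2.2)) (a,b,c)
          = y0^a * y1^b * y2^c := by simp [map_mul, map_pow]; rfl
      rw [hx]
      have key : y2 * (y0^a * y1^b * y2^c)
          = y0^a * (y2 * (y1^b * y2^c)) - ((a:ℂ)*q) • (y0^(a+1) * y1^b * y2^c) := by
        calc y2 * (y0^a * y1^b * y2^c) = (y2 * y0^a) * (y1^b * y2^c) := by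
              rw [mul_assoc, ← mul_assoc y2]
        _ = (y0^a * y2) * (y1^b * y2^c) - ((a:ℂ)*q) • (y0^(a+1) * (y1^b * y2^c)) := by
              rw [powB, sub_mul, smul_mul_assoc]
        _ = y0^a * (y2 * (y1^b * y2^c)) - ((a:ℂ)*q) • (y0^(a+1) * y1^b * y2^c) := by
              rw [mul_assoc, ← mul_assoc (y0^(a+1))]
      rw [key]
      exact sub_mem (c0a a _ (caux b c)) (W.smul_mem _ (memW _ _ _))
    · simp
    · intro x y _ _ hx hy
      rw [mul_add]; exact add_mem hx hy
    · intro r x _ hx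
      rw [mul_smul_comm]; exact W.smul_mem r hx
  have main : ∀ z : F, ∀ w ∈ W, π z * w ∈ W := by
    intro z
    induction z using FreeAlgebra.induction with
    | grade0 r =>
        intro w hw
        rw [AlgHom.commutes, ← Algebra.smul_def]
        exact W.smul_mem r hw
    | grade1 i =>
        fin_cases i
        · exact c0
        · exact c2
        · exact c3
    | mul a b ha hb =>
        intro w hw
        rw [map_mul, mul_assoc]
        exact ha _ (hb w hw)
    | add a b ha hb =>
        intro w hw
        rw [map_add, add_mul]
        exact add_mem (ha w hw) (hb w hw)
  refine eq_top_iff.mpr fun z _ => ?_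
  obtain ⟨f, rfl⟩ := RingQuot.mkAlgHom_surjective ℂ (rel l q k) z
  have h1 : (1 : RingQuot (rel l q k)) ∈ W := by simpa using memW 0 0 0
  simpa using main f 1 h1
end SpanSide


/-- the images in `F/I` of the monomials `x₁^{a₁} x₂^{a₂} x₃^{a₃}` form a `ℂ`-basis. -/
theorem basis_R15_t_one (l q k : ℂ) :
    LinearIndependent ℂ (fun e : ℕ × ℕ × ℕ =>
      RingQuot.mkAlgHom ℂ (rel l q k) (X 0 ^ e.1 * X 1 ^ e.2.1 * X 2 ^ e.2.2)) ∧
    Submodule.span ℂ (Set.range (fun e : ℕ × ℕ × ℕ =>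
      RingQuot.mkAlgHom ℂ (rel l q k) (X 0 ^ e.1 * X 1 ^ e.2.1 * X 2 ^ e.2.2))) = ⊤ := by
  exact ⟨indep l q k, span_top l q k⟩
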